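/- Let B be a nonarchimedean commutative Banach ring. The following are equivalent: (1) the norm on B is equivalent to some power-multiplicative norm; (2) for every integer m > 1 there exists c > 0 with |x^m| ≥ c |x|^m for all x ∈ B; (3) there exists c > 0 with |x|_sp ≥ c |x| for all x ∈ B, where |x|_sp = lim_n |x^n|^{1/n}. -/

import Mathlib

/-- A (nonarchimedean, commutative) Banach ring norm. -/
structure IsNABanach {B : Type*} [CommRing B] (nm : B → ℝ) : Prop where
  nonneg : ∀ x, 0 ≤ nm x
  eq_zero_iff : ∀ x, nm x = 0 ↔ x = 0
  nonarch : ∀ x y, nm (x - y) ≤ max (nm x) (nm y)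
  submul : ∀ x y, nm (x * y) ≤ nm x * nm y
  complete : ∀ u : ℕ → B,
    (∀ ε : ℝ, 0 < ε → ∃ N, ∀ m ≥ N, ∀ n ≥ N, nm (u m - u n) < ε) →
    ∃ x, ∀ ε : ℝ, 0 < ε → ∃ N, ∀ n ≥ N, nm (u n - x) < ε

/-- A nonarchimedean submultiplicative ring norm (no completeness required). -/
structure IsNARingNorm {B : Type*} [CommRing B] (nm : B → ℝ) : Prop where
  nonneg : ∀ x, 0 ≤ nm x
  eq_zero_iff : ∀ x, nm x = 0 ↔ x = 0
  nonarch : ∀ x y, nm (x - y) ≤ max (nm x) (nm y)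
  submul : ∀ x y, nm (x * y) ≤ nm x * nm y

namespace Stmt4Aux

variable {B : Type*} [CommRing B] {nm : B → ℝ}

lemma nm_zero (h : IsNABanach nm) : nm 0 = 0 := (h.eq_zero_iff 0).2 rfl

lemma nm_neg (h : IsNABanach nm) (y : B) : nm (-y) = nm y := by
  have h1 : ∀ z : B, nm (-z) ≤ nm z := fun z => by
    have h2 := h.nonarch 0 z
    rw [zero_sub, nm_zero h, max_eq_right (h.nonneg z)] at h2
    exact h2
  refine le_antisymm (h1 y) ?_
  simpa using h1 (-y)

lemma nm_add (h : IsNABanach nm) (x y : B) : nm (x + y) ≤ max (nm x) (nm y) := by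
  have := h.nonarch x (-y)
  simpa [nm_neg h, sub_neg_eq_add] using this

lemma nm_sum (h : IsNABanach nm) {ι : Type*} (s : Finset ι) (f : ι → B) {M : ℝ}
    (hM : 0 ≤ M) (hf : ∀ i ∈ s, nm (f i) ≤ M) : nm (∑ i ∈ s, f i) ≤ M := by
  classical
  revert hf
  induction s using Finset.induction with
  | empty => intro _; simpa [nm_zero h] using hM
  | @insert a s has ih =>
    intro hf
    rw [Finset.sum_insert has]
    refine le_trans (nm_add h _ _) (max_le (hf a (Finset.mem_insert_self a s)) ?_)
    exact ih (fun i hi => hf i (Finset.mem_insert_of_mem hi))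

lemma nm_natCast_mul (h : IsNABanach nm) (k : ℕ) (x : B) : nm (x * (k : B)) ≤ nm x := by
  induction k with
  | zero => simp [nm_zero h, h.nonneg x]
  | succ k ih =>
    have : x * ((k + 1 : ℕ) : B) = x * (k : B) + x := by push_cast; ring
    rw [this]
    exact le_trans (nm_add h _ _) (max_le ih le_rfl)

lemma nm_mul_pow (h : IsNABanach nm) (z x : B) (d : ℕ) :
    nm (z * x ^ d) ≤ nm z * nm x ^ d := by
  induction d with
  | zero => simp
  | succ d ih =>
    have e : z * x ^ (d + 1) = z * x ^ d * x := by ring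
    rw [e, pow_succ, ← mul_assoc]
    exact le_trans (h.submul _ _) (mul_le_mul_of_nonneg_right ih (h.nonneg x))

lemma nm_pow_le (h : IsNABanach nm) (x : B) {n : ℕ} (hn : 1 ≤ n) :
    nm (x ^ n) ≤ nm x ^ n := by
  obtain ⟨d, rfl⟩ := Nat.exists_eq_add_of_le hn
  have : x ^ (1 + d) = x * x ^ d := by ring
  rw [this, pow_add, pow_one]
  exact nm_mul_pow h x x d

/-- If `a^n ≤ K * M^n` for all `n ≥ 1` then `a ≤ M`. -/
lemma le_of_pow_le_mul_pow {a M K : ℝ} (ha : 0 ≤ a) (hM : 0 ≤ M) (hK : 0 < K)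
    (h : ∀ n : ℕ, 1 ≤ n → a ^ n ≤ K * M ^ n) : a ≤ M := by
  by_contra hcon
  push_neg at hcon
  have ha' : 0 < a := lt_of_le_of_lt hM hcon
  rcases eq_or_lt_of_le hM with hM0 | hM0
  · have := h 1 le_rfl
    rw [pow_one, pow_one, ← hM0, mul_zero] at this
    exact absurd this (not_le.2 ha')
  · set r := a / M with hr
    have hr1 : 1 < r := (one_lt_div hM0).2 hcon
    obtain ⟨n, hn⟩ := pow_unbounded_of_one_lt K hr1
    have hn' : K < r ^ (n + 1) :=
      lt_of_lt_of_le hn (pow_le_pow_right₀ hr1.le (Nat.le_succ n))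
    have hMp : (0:ℝ) < M ^ (n + 1) := pow_pos hM0 _
    have h1 : K * M ^ (n + 1) < r ^ (n + 1) * M ^ (n + 1) :=
      (mul_lt_mul_iff_left₀ hMp).2 hn'
    have h2 : r ^ (n + 1) * M ^ (n + 1) = a ^ (n + 1) := by
      rw [← mul_pow, hr, div_mul_cancel₀ _ hM0.ne']
    have := h (n + 1) (Nat.le_add_left 1 n)
    rw [← h2] at this
    exact absurd (lt_of_le_of_lt this h1) (lt_irrefl _)

/-- The spectral seminorm. -/
noncomputable def spNorm (nm : B → ℝ) (x : B) : ℝ :=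
  ⨅ n : ℕ+, Real.rpow (nm (x ^ (n : ℕ))) ((n : ℝ)⁻¹)

lemma sp_bddBelow (h : IsNABanach nm) (x : B) :
    BddBelow (Set.range fun n : ℕ+ => Real.rpow (nm (x ^ (n : ℕ))) ((n : ℝ)⁻¹)) := by
  refine ⟨0, fun t ht => ?_⟩
  obtain ⟨n, rfl⟩ := ht
  exact Real.rpow_nonneg (h.nonneg _) _

lemma sp_nonneg (h : IsNABanach nm) (x : B) : 0 ≤ spNorm nm x :=
  le_ciInf fun n => Real.rpow_nonneg (h.nonneg _) _

lemma sp_le_term (h : IsNABanach nm) (x : B) (n : ℕ+) :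
    spNorm nm x ≤ Real.rpow (nm (x ^ (n : ℕ))) ((n : ℝ)⁻¹) :=
  ciInf_le (sp_bddBelow h x) n

lemma sp_le_nm (h : IsNABanach nm) (x : B) : spNorm nm x ≤ nm x := by
  have := sp_le_term h x 1
  simpa [Real.rpow_natCast] using this

lemma term_eq (x : B) (a : ℝ) (ha : 0 ≤ a) (n : ℕ+) :
    Real.rpow a ((n : ℝ)⁻¹) = a ^ ((n : ℕ) : ℝ)⁻¹ := by
  norm_cast

lemma sp_pow (h : IsNABanach nm) (x : B) {m : ℕ} (hm : 1 ≤ m) :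
    spNorm nm (x ^ m) = spNorm nm x ^ m := by
  have hm0 : (m : ℝ) ≠ 0 := Nat.cast_ne_zero.2 (by omega)
  have hmpos : 0 < m := hm
  refine le_antisymm ?_ ?_
  · -- spNorm (x^m) ≤ spNorm x ^ m
    set s := spNorm nm (x ^ m) with hs
    have hs0 : 0 ≤ s := sp_nonneg h _
    have key : ∀ n : ℕ+, s ≤ (Real.rpow (nm (x ^ (n : ℕ))) ((n : ℝ)⁻¹)) ^ m := by
      intro n
      have h1 : s ≤ Real.rpow (nm ((x ^ m) ^ (n : ℕ))) ((n : ℝ)⁻¹) := sp_le_term h _ n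
      have h2 : nm ((x ^ m) ^ (n : ℕ)) ≤ nm (x ^ (n : ℕ)) ^ m := by
        rw [← pow_mul, mul_comm, pow_mul]
        exact nm_pow_le h _ hm
      have h3 : Real.rpow (nm ((x ^ m) ^ (n : ℕ))) ((n : ℝ)⁻¹)
          ≤ Real.rpow (nm (x ^ (n : ℕ)) ^ m) ((n : ℝ)⁻¹) :=
        Real.rpow_le_rpow (h.nonneg _) h2 (by positivity)
      have h4 : Real.rpow (nm (x ^ (n : ℕ)) ^ m) ((n : ℝ)⁻¹)
          = (Real.rpow (nm (x ^ (n : ℕ))) ((n : ℝ)⁻¹)) ^ m := by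
        have hnn : (0:ℝ) ≤ nm (x ^ (n : ℕ)) := h.nonneg _
        rw [show Real.rpow (nm (x ^ (n : ℕ)) ^ m) ((n : ℝ)⁻¹)
              = (nm (x ^ (n : ℕ)) ^ m) ^ ((n : ℝ)⁻¹) from rfl,
            ← Real.rpow_natCast (nm (x ^ (n : ℕ))) m, ← Real.rpow_mul hnn,
            mul_comm, Real.rpow_mul hnn, Real.rpow_natCast]
        rfl
      rw [← h4]
      exact le_trans h1 h3
    have key2 : ∀ n : ℕ+, s ^ ((m : ℝ))⁻¹ ≤ Real.rpow (nm (x ^ (n : ℕ))) ((n : ℝ)⁻¹) := by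
      intro n
      have hfn : 0 ≤ Real.rpow (nm (x ^ (n : ℕ))) ((n : ℝ)⁻¹) := Real.rpow_nonneg (h.nonneg _) _
      have := Real.rpow_le_rpow hs0 (key n) (by positivity : (0:ℝ) ≤ ((m:ℝ))⁻¹)
      rwa [Real.pow_rpow_inv_natCast hfn (by omega)] at this
    have h5 : s ^ ((m : ℝ))⁻¹ ≤ spNorm nm x := le_ciInf key2
    have h6 : (s ^ ((m : ℝ))⁻¹) ^ m ≤ spNorm nm x ^ m :=
      pow_le_pow_left₀ (Real.rpow_nonneg hs0 _) h5 m
    rwa [Real.rpow_inv_natCast_pow hs0 (by omega)] at h6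
  · -- spNorm x ^ m ≤ spNorm (x^m)
    refine le_ciInf fun n => ?_
    have hidx : spNorm nm x ≤ Real.rpow (nm (x ^ ((⟨m, hmpos⟩ * n : ℕ+) : ℕ)))
        (((⟨m, hmpos⟩ * n : ℕ+) : ℝ)⁻¹) := sp_le_term h x _
    have hmn : ((⟨m, hmpos⟩ * n : ℕ+) : ℕ) = m * (n : ℕ) := rfl
    have hnn : (0:ℝ) ≤ nm (x ^ (m * (n : ℕ))) := h.nonneg _
    have h1 : spNorm nm x ^ m ≤ (Real.rpow (nm (x ^ (m * (n : ℕ)))) (((m * (n:ℕ) : ℕ) : ℝ)⁻¹)) ^ m := by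
      refine pow_le_pow_left₀ (sp_nonneg h x) ?_ m
      convert hidx using 3
      · rfl
      all_goals (rw [hmn] <;> push_cast <;> ring)
    have h2 : (Real.rpow (nm (x ^ (m * (n : ℕ)))) (((m * (n:ℕ) : ℕ) : ℝ)⁻¹)) ^ m
        = Real.rpow (nm ((x ^ m) ^ (n : ℕ))) ((n : ℝ)⁻¹) := by
      rw [← pow_mul]
      show ((nm (x ^ (m * (n:ℕ)))) ^ (((m * (n:ℕ) : ℕ) : ℝ)⁻¹)) ^ m
          = (nm (x ^ (m * (n:ℕ)))) ^ ((n:ℝ)⁻¹)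
      rw [← Real.rpow_natCast ((nm (x ^ (m * (n:ℕ)))) ^ (((m * (n:ℕ) : ℕ) : ℝ)⁻¹)) m,
          ← Real.rpow_mul hnn]
      congr 1
      have hn0 : ((n : ℕ) : ℝ) ≠ 0 := Nat.cast_ne_zero.2 n.pos.ne'
      push_cast
      field_simp
    rw [← h2]
    exact h1

lemma inf_mul_aux {u v : ℕ+ → ℝ} (hu : ∀ m, 0 ≤ u m) (hv : ∀ k, 0 ≤ v k) {a : ℝ}
    (h : ∀ m k, a ≤ u m * v k) : a ≤ (⨅ m, u m) * (⨅ k, v k) := by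
  have hU : 0 ≤ ⨅ m, u m := le_ciInf hu
  have hV : 0 ≤ ⨅ k, v k := le_ciInf hv
  by_cases hz : ∃ m, u m = 0
  · obtain ⟨m, hm⟩ := hz
    have := h m 1
    rw [hm, zero_mul] at this
    exact this.trans (mul_nonneg hU hV)
  · push_neg at hz
    have hupos : ∀ m, 0 < u m := fun m => lt_of_le_of_ne (hu m) (Ne.symm (hz m))
    have h2 : ∀ m, a ≤ u m * (⨅ k, v k) := by
      intro m
      have h3 : a / u m ≤ ⨅ k, v k :=
        le_ciInf fun k => (div_le_iff₀ (hupos m)).2 (by rw [mul_comm]; exact h m k)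
      calc a = a / u m * u m := (div_mul_cancel₀ a (hz m)).symm
        _ ≤ (⨅ k, v k) * u m := mul_le_mul_of_nonneg_right h3 (hu m)
        _ = u m * (⨅ k, v k) := mul_comm _ _
    rcases eq_or_lt_of_le hV with hV0 | hV0
    · have := h2 1
      rw [← hV0, mul_zero] at this
      exact this.trans (mul_nonneg hU hV)
    · have h4 : a / (⨅ k, v k) ≤ ⨅ m, u m :=
        le_ciInf fun m => (div_le_iff₀ hV0).2 (h2 m)
      calc a = (a / (⨅ k, v k)) * (⨅ k, v k) := (div_mul_cancel₀ a hV0.ne').symm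
        _ ≤ (⨅ m, u m) * (⨅ k, v k) := mul_le_mul_of_nonneg_right h4 hV

lemma sp_submul (h : IsNABanach nm) (x y : B) :
    spNorm nm (x * y) ≤ spNorm nm x * spNorm nm y := by
  refine inf_mul_aux (fun m => Real.rpow_nonneg (h.nonneg _) _)
    (fun k => Real.rpow_nonneg (h.nonneg _) _) (fun m k => ?_)
  have hmk : ((m * k : ℕ+) : ℕ) = (m : ℕ) * (k : ℕ) := rfl
  have h1 : spNorm nm (x * y) ≤ Real.rpow (nm ((x * y) ^ ((m * k : ℕ+) : ℕ)))
      (((m * k : ℕ+) : ℝ)⁻¹) := sp_le_term h _ _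
  have h2 : nm ((x * y) ^ ((m : ℕ) * (k : ℕ))) ≤ nm (x ^ (m : ℕ)) ^ (k : ℕ) * nm (y ^ (k : ℕ)) ^ (m : ℕ) := by
    rw [mul_pow]
    refine le_trans (h.submul _ _) (mul_le_mul ?_ ?_ (h.nonneg _) (pow_nonneg (h.nonneg _) _))
    · rw [pow_mul]
      exact nm_pow_le h _ k.pos
    · rw [mul_comm (m : ℕ), pow_mul]
      exact nm_pow_le h _ m.pos
  have h3 : Real.rpow (nm ((x * y) ^ ((m : ℕ) * (k : ℕ)))) ((((m : ℕ) * (k : ℕ) : ℕ) : ℝ)⁻¹)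
      ≤ Real.rpow (nm (x ^ (m : ℕ)) ^ (k : ℕ) * nm (y ^ (k : ℕ)) ^ (m : ℕ))
          ((((m : ℕ) * (k : ℕ) : ℕ) : ℝ)⁻¹) :=
    Real.rpow_le_rpow (h.nonneg _) h2 (by positivity)
  have h4 : Real.rpow (nm (x ^ (m : ℕ)) ^ (k : ℕ) * nm (y ^ (k : ℕ)) ^ (m : ℕ))
          ((((m : ℕ) * (k : ℕ) : ℕ) : ℝ)⁻¹)
      = Real.rpow (nm (x ^ (m : ℕ))) ((m : ℝ)⁻¹) * Real.rpow (nm (y ^ (k : ℕ))) ((k : ℝ)⁻¹) := by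
    have hx0 : (0:ℝ) ≤ nm (x ^ (m : ℕ)) := h.nonneg _
    have hy0 : (0:ℝ) ≤ nm (y ^ (k : ℕ)) := h.nonneg _
    have hm0 : ((m : ℕ) : ℝ) ≠ 0 := Nat.cast_ne_zero.2 m.pos.ne'
    have hk0 : ((k : ℕ) : ℝ) ≠ 0 := Nat.cast_ne_zero.2 k.pos.ne'
    show (nm (x ^ (m:ℕ)) ^ (k:ℕ) * nm (y ^ (k:ℕ)) ^ (m:ℕ)) ^ ((((m:ℕ) * (k:ℕ) : ℕ) : ℝ)⁻¹)
        = nm (x ^ (m:ℕ)) ^ (((m:ℕ):ℝ))⁻¹ * nm (y ^ (k:ℕ)) ^ (((k:ℕ):ℝ))⁻¹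
    rw [Real.mul_rpow (pow_nonneg hx0 _) (pow_nonneg hy0 _),
        ← Real.rpow_natCast (nm (x ^ (m:ℕ))) (k:ℕ), ← Real.rpow_natCast (nm (y ^ (k:ℕ))) (m:ℕ),
        ← Real.rpow_mul hx0, ← Real.rpow_mul hy0]
    congr 2
    · push_cast; first | (field_simp; ring) | field_simp | skip
    · push_cast; first | (field_simp; ring) | field_simp | skip
  calc spNorm nm (x * y) ≤ _ := h1
    _ ≤ _ := by
        rw [show (((m * k : ℕ+) : ℝ))⁻¹ = ((((m:ℕ) * (k:ℕ) : ℕ) : ℝ))⁻¹ by push_cast; ring, hmk]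
        exact h3
    _ = _ := h4

/-- Key estimate from condition (2) at m = 2: `(c² |x|)^n ≤ |x^n|`. -/
lemma c2_pow_bound (h : IsNABanach nm) {c : ℝ} (hc0 : 0 < c) (hc1 : c ≤ 1)
    (h2 : ∀ x : B, c * nm x ^ 2 ≤ nm (x ^ 2)) (x : B) {n : ℕ} (hn : 1 ≤ n) :
    (c ^ 2 * nm x) ^ n ≤ nm (x ^ n) := by
  by_cases hx0 : nm x = 0
  · rw [hx0, mul_zero, zero_pow (by omega)]
    exact h.nonneg _
  have hxpos : 0 < nm x := lt_of_le_of_ne (h.nonneg x) (Ne.symm hx0)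
  -- Step A: dyadic powers
  have hA : ∀ k : ℕ, c ^ (2 ^ k - 1) * nm x ^ (2 ^ k) ≤ nm (x ^ (2 ^ k)) := by
    intro k
    induction k with
    | zero => simp
    | succ k ih =>
      have h2k : 1 ≤ 2 ^ k := Nat.one_le_two_pow
      have e1 : x ^ (2 ^ (k + 1)) = (x ^ (2 ^ k)) ^ 2 := by
        rw [← pow_mul]; congr 1
      have h5 : c * nm (x ^ (2 ^ k)) ^ 2 ≤ nm ((x ^ (2 ^ k)) ^ 2) := h2 _
      have h6 : c * (c ^ (2 ^ k - 1) * nm x ^ (2 ^ k)) ^ 2 ≤ c * nm (x ^ (2 ^ k)) ^ 2 := by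
        refine mul_le_mul_of_nonneg_left ?_ hc0.le
        exact pow_le_pow_left₀ (by positivity) ih 2
      have e2 : c * (c ^ (2 ^ k - 1) * nm x ^ (2 ^ k)) ^ 2
          = c ^ (2 ^ (k + 1) - 1) * nm x ^ (2 ^ (k + 1)) := by
        rw [mul_pow, ← pow_mul, ← pow_mul, ← mul_assoc, ← pow_succ']
        congr 2 <;> omega
      rw [e1, ← e2]
      exact le_trans h6 h5
  -- Step B
  have hkex : ∃ k : ℕ, n ≤ 2 ^ k ∧ 2 ^ k ≤ 2 * n := by
    rcases eq_or_lt_of_le hn with h1 | h1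
    · exact ⟨0, by rw [pow_zero]; omega, by rw [pow_zero]; omega⟩
    · refine ⟨Nat.clog 2 n, Nat.le_pow_clog one_lt_two n, ?_⟩
      have hlt := Nat.pow_pred_clog_lt_self one_lt_two h1
      rw [Nat.pred_eq_sub_one] at hlt
      have hkpos : 0 < Nat.clog 2 n := Nat.clog_pos one_lt_two h1
      have he : 2 ^ Nat.clog 2 n = 2 * 2 ^ (Nat.clog 2 n - 1) := by
        rw [← pow_succ']; congr 1; omega
      omega
  obtain ⟨k, hk1, hk2⟩ := hkex
  set d := 2 ^ k - n with hd
  have hnd : n + d = 2 ^ k := by omega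
  have hsplit : nm (x ^ (2 ^ k)) ≤ nm (x ^ n) * nm x ^ d := by
    rw [← hnd, pow_add]
    exact nm_mul_pow h _ _ _
  have hmain : c ^ (2 ^ k - 1) * nm x ^ (2 ^ k) ≤ nm (x ^ n) * nm x ^ d :=
    le_trans (hA k) hsplit
  have hfinal : c ^ (2 ^ k - 1) * nm x ^ n ≤ nm (x ^ n) := by
    have hdp : (0:ℝ) < nm x ^ d := pow_pos hxpos d
    rw [← mul_le_mul_iff_left₀ hdp]
    calc c ^ (2 ^ k - 1) * nm x ^ n * nm x ^ d
        = c ^ (2 ^ k - 1) * nm x ^ (2 ^ k) := by rw [mul_assoc, ← pow_add, hnd]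
      _ ≤ nm (x ^ n) * nm x ^ d := hmain
  calc (c ^ 2 * nm x) ^ n = c ^ (2 * n) * nm x ^ n := by rw [mul_pow, ← pow_mul]
    _ ≤ c ^ (2 ^ k - 1) * nm x ^ n := by
        refine mul_le_mul_of_nonneg_right ?_ (by positivity)
        exact pow_le_pow_of_le_one hc0.le hc1 (by omega)
    _ ≤ nm (x ^ n) := hfinal


lemma pnat_cast_real (n : ℕ+) : ((n : ℝ)) = (((n : ℕ)) : ℝ) := rfl

lemma nm_neg_pow (h : IsNABanach nm) (y : B) (k : ℕ) : nm ((-y) ^ k) = nm (y ^ k) := by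
  rcases neg_one_pow_eq_or B k with hk | hk
  · rw [neg_pow, hk, one_mul]
  · rw [neg_pow, hk, neg_one_mul, nm_neg h]

/-- (2) implies (3). -/
lemma L23 (h : IsNABanach nm)
    (h2 : ∀ m : ℕ, 1 < m → ∃ c : ℝ, 0 < c ∧ ∀ x, c * nm x ^ m ≤ nm (x ^ m)) :
    ∃ c : ℝ, 0 < c ∧ ∀ x, c * nm x ≤ spNorm nm x := by
  obtain ⟨c, hc, hcx⟩ := h2 2 one_lt_two
  set c' := min c 1 with hc'
  have hc'0 : 0 < c' := lt_min hc one_pos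
  have hc'1 : c' ≤ 1 := min_le_right _ _
  have hcx' : ∀ x : B, c' * nm x ^ 2 ≤ nm (x ^ 2) := fun x =>
    le_trans (mul_le_mul_of_nonneg_right (min_le_left c 1) (by positivity)) (hcx x)
  refine ⟨c' ^ 2, by positivity, fun x => ?_⟩
  refine le_ciInf fun n => ?_
  have hb := c2_pow_bound h hc'0 hc'1 hcx' x (n := (n : ℕ)) n.pos
  have h0 : (0:ℝ) ≤ c' ^ 2 * nm x := mul_nonneg (by positivity) (h.nonneg x)
  have h1 := Real.rpow_le_rpow (pow_nonneg h0 _) hb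
    (inv_nonneg.2 (Nat.cast_nonneg _) : (0:ℝ) ≤ (((n : ℕ) : ℝ))⁻¹)
  rw [Real.pow_rpow_inv_natCast h0 n.pos.ne'] at h1
  rw [pnat_cast_real]
  exact h1

/-- (3) implies (2). -/
lemma L32 (h : IsNABanach nm)
    (h3 : ∃ c : ℝ, 0 < c ∧ ∀ x, c * nm x ≤ spNorm nm x) :
    ∀ m : ℕ, 1 < m → ∃ c : ℝ, 0 < c ∧ ∀ x, c * nm x ^ m ≤ nm (x ^ m) := by
  obtain ⟨c, hc, hcx⟩ := h3
  intro m hm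
  refine ⟨c ^ m, pow_pos hc m, fun x => ?_⟩
  have hm0 : 0 < m := by omega
  have h1 : c * nm x ≤ Real.rpow (nm (x ^ ((⟨m, hm0⟩ : ℕ+) : ℕ)))
      (((⟨m, hm0⟩ : ℕ+) : ℝ)⁻¹) := (hcx x).trans (sp_le_term h x ⟨m, hm0⟩)
  have h1' : c * nm x ≤ (nm (x ^ m)) ^ (((m : ℕ) : ℝ))⁻¹ := h1
  have h2 : (c * nm x) ^ m ≤ ((nm (x ^ m)) ^ (((m : ℕ) : ℝ))⁻¹) ^ m :=
    pow_le_pow_left₀ (mul_nonneg hc.le (h.nonneg x)) h1' m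
  rw [Real.rpow_inv_natCast_pow (h.nonneg _) (by omega), mul_pow] at h2
  exact h2

/-- (1) implies (2). -/
lemma L12 (h : IsNABanach nm)
    (h1 : ∃ nm' : B → ℝ, IsNARingNorm nm' ∧
      (∀ (x : B) (n : ℕ), 1 ≤ n → nm' (x ^ n) = nm' x ^ n) ∧
      ∃ c C : ℝ, 0 < c ∧ 0 < C ∧ ∀ x, c * nm' x ≤ nm x ∧ nm x ≤ C * nm' x) :
    ∀ m : ℕ, 1 < m → ∃ c : ℝ, 0 < c ∧ ∀ x, c * nm x ^ m ≤ nm (x ^ m) := by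
  obtain ⟨nm', hn', hpm, c, C, hc, hC, hbd⟩ := h1
  intro m hm
  refine ⟨c / C ^ m, by positivity, fun x => ?_⟩
  have h1 : c * nm' (x ^ m) ≤ nm (x ^ m) := (hbd (x ^ m)).1
  rw [hpm x m (by omega)] at h1
  have h2 : nm x / C ≤ nm' x := by
    rw [div_le_iff₀ hC]
    rw [mul_comm]
    exact (hbd x).2
  have h3 : (nm x / C) ^ m ≤ nm' x ^ m :=
    pow_le_pow_left₀ (div_nonneg (h.nonneg x) hC.le) h2 m
  calc c / C ^ m * nm x ^ m = c * (nm x / C) ^ m := by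
        rw [div_pow]; ring
    _ ≤ c * nm' x ^ m := mul_le_mul_of_nonneg_left h3 hc.le
    _ ≤ nm (x ^ m) := h1

/-- The spectral seminorm is nonarchimedean (given the lower bound (3)). -/
lemma sp_nonarch (h : IsNABanach nm) {c : ℝ} (hc0 : 0 < c)
    (hc : ∀ x, c * nm x ≤ spNorm nm x) (x y : B) :
    spNorm nm (x - y) ≤ max (spNorm nm x) (spNorm nm y) := by
  set M := max (spNorm nm x) (spNorm nm y) with hM
  have hM0 : 0 ≤ M := le_trans (sp_nonneg h x) (le_max_left _ _)
  set A := max (1 / c) (max (nm 1) 1) with hA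
  have hA1 : 1 ≤ A := le_trans (le_max_right _ _) (le_max_right _ _)
  have hA0 : 0 < A := lt_of_lt_of_le one_pos hA1
  have hbound : ∀ (z : B), spNorm nm z ≤ M → ∀ i : ℕ, nm (z ^ i) ≤ A * M ^ i := by
    intro z hz i
    cases i with
    | zero =>
      simp only [pow_zero, mul_one]
      exact le_trans (le_max_left (nm 1) 1) (le_max_right (1 / c) _)
    | succ i =>
      have h1 : c * nm (z ^ (i + 1)) ≤ spNorm nm (z ^ (i + 1)) := hc _
      rw [sp_pow h z (by omega)] at h1
      have h2 : spNorm nm z ^ (i + 1) ≤ M ^ (i + 1) :=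
        pow_le_pow_left₀ (sp_nonneg h z) hz (i + 1)
      have h3 : nm (z ^ (i + 1)) ≤ (1 / c) * M ^ (i + 1) := by
        rw [div_mul_eq_mul_div, le_div_iff₀ hc0, mul_comm (nm _) c, one_mul]
        exact le_trans h1 h2
      exact le_trans h3 (mul_le_mul_of_nonneg_right (le_max_left _ _) (by positivity))
  have hxb := hbound x (le_max_left _ _)
  have hyb := hbound y (le_max_right _ _)
  have hn : ∀ n : ℕ, 1 ≤ n → nm ((x - y) ^ n) ≤ A ^ 2 * M ^ n := by
    intro n hn1
    have e : (x - y) ^ n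
        = ∑ i ∈ Finset.range (n + 1), x ^ i * (-y) ^ (n - i) * ((n.choose i : ℕ) : B) := by
      rw [sub_eq_add_neg, add_pow]
    rw [e]
    refine nm_sum h _ _ (by positivity) fun i hi => ?_
    have hin : i ≤ n := Nat.lt_succ_iff.mp (Finset.mem_range.mp hi)
    have hMpow : M ^ i * M ^ (n - i) = M ^ n := by
      rw [← pow_add]; congr 1; omega
    calc nm (x ^ i * (-y) ^ (n - i) * ((n.choose i : ℕ) : B))
        ≤ nm (x ^ i * (-y) ^ (n - i)) := nm_natCast_mul h _ _
      _ ≤ nm (x ^ i) * nm ((-y) ^ (n - i)) := h.submul _ _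
      _ = nm (x ^ i) * nm (y ^ (n - i)) := by rw [nm_neg_pow h]
      _ ≤ (A * M ^ i) * (A * M ^ (n - i)) :=
          mul_le_mul (hxb i) (hyb (n - i)) (h.nonneg _) (by positivity)
      _ = A ^ 2 * M ^ n := by rw [← hMpow]; ring
  refine le_of_pow_le_mul_pow (K := A ^ 2) (sp_nonneg h _) hM0 (by positivity) fun n hn1 => ?_
  calc (spNorm nm (x - y)) ^ n = spNorm nm ((x - y) ^ n) := (sp_pow h _ hn1).symm
    _ ≤ nm ((x - y) ^ n) := sp_le_nm h _
    _ ≤ A ^ 2 * M ^ n := hn n hn1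

/-- (2) implies (1). -/
lemma L21 (h : IsNABanach nm)
    (h2 : ∀ m : ℕ, 1 < m → ∃ c : ℝ, 0 < c ∧ ∀ x, c * nm x ^ m ≤ nm (x ^ m)) :
    ∃ nm' : B → ℝ, IsNARingNorm nm' ∧
      (∀ (x : B) (n : ℕ), 1 ≤ n → nm' (x ^ n) = nm' x ^ n) ∧
      ∃ c C : ℝ, 0 < c ∧ 0 < C ∧ ∀ x, c * nm' x ≤ nm x ∧ nm x ≤ C * nm' x := by
  obtain ⟨c, hc0, hc⟩ := L23 h h2
  refine ⟨spNorm nm, ⟨sp_nonneg h, ?_, sp_nonarch h hc0 hc, sp_submul h⟩,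
    fun x n hn => sp_pow h x hn, 1, 1 / c, one_pos, by positivity, fun x => ⟨?_, ?_⟩⟩
  · intro x
    constructor
    · intro hsp
      have h1 : c * nm x ≤ 0 := by rw [← hsp]; exact hc x
      have h2 : nm x ≤ 0 := by nlinarith [h.nonneg x]
      exact (h.eq_zero_iff x).1 (le_antisymm h2 (h.nonneg x))
    · rintro rfl
      refine le_antisymm ?_ (sp_nonneg h 0)
      calc spNorm nm 0 ≤ nm 0 := sp_le_nm h 0
        _ = 0 := nm_zero h
  · rw [one_mul]; exact sp_le_nm h x
  · have h1 := hc x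
    rw [div_mul_eq_mul_div, le_div_iff₀ hc0, mul_comm (nm x) c, one_mul]
    exact h1

end Stmt4Aux

theorem stmt4 {B : Type*} [CommRing B] (nm : B → ℝ) (hB : IsNABanach nm) :
    let c1 : Prop := ∃ nm' : B → ℝ, IsNARingNorm nm' ∧
      (∀ (x : B) (n : ℕ), 1 ≤ n → nm' (x ^ n) = nm' x ^ n) ∧
      ∃ c C : ℝ, 0 < c ∧ 0 < C ∧ ∀ x, c * nm' x ≤ nm x ∧ nm x ≤ C * nm' x
    let c2 : Prop := ∀ m : ℕ, 1 < m → ∃ c : ℝ, 0 < c ∧ ∀ x, c * nm x ^ m ≤ nm (x ^ m)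
    let c3 : Prop := ∃ c : ℝ, 0 < c ∧
      ∀ x, c * nm x ≤ ⨅ n : ℕ+, Real.rpow (nm (x ^ (n : ℕ))) ((n : ℝ)⁻¹)
    (c1 ↔ c2) ∧ (c2 ↔ c3) := by
  intro c1 c2 c3
  exact ⟨⟨fun h1 => Stmt4Aux.L12 hB h1, fun h2 => Stmt4Aux.L21 hB h2⟩,
    ⟨fun h2 => Stmt4Aux.L23 hB h2, fun h3 => Stmt4Aux.L32 hB h3⟩⟩
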